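/- Let p be a prime, e \ge 1 with p \nmid e, and let k be a finite field of characteristic p. Let E_K = k((\pi_K)) with \pi = \pi_K^e, equipped with the operator \psi defined via the trace: for a = \sum_i a_i \pi_K^i, the condition \psi(a) = a is equivalent to the system of equations \sum_{n=0}^{p-1} a_{kp+ne} (-1)^n = a_k^{\sigma} for all k \in \mathbb{Z}, where \sigma is the p-power Frobenius on k. Then for any a \in E_K with \psi(a) = a, the \pi_K-adic valuation l(a) of a satisfies l(a) \ge -e, and moreover if l(a) > -e then l(a) \not\equiv -e \pmod{p}. -/

import Mathlib

/-- Let `E_K = k((π_K))` with `π = π_K^e` (`k` a finite field of characteristic `p`,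
`p ∤ e`, Frobenius `σ : x ↦ x^p`).  If `a = ∑ aᵢ π_K^i` satisfies the system
`∑_{n=0}^{p-1} a_{kp+ne}·(-1)^n = σ(a_k)` for all `k ∈ ℤ` (the condition `ψ(a) = a`),
then the `π_K`-adic valuation `l(a)` of `a ≠ 0` satisfies `l(a) ≥ -e`, and if
`l(a) > -e` then `l(a) ≢ -e (mod p)`. -/
theorem stmt_16 (p : ℕ) (hp : p.Prime) (e : ℕ) (he : 0 < e) (hpe : ¬ p ∣ e)
    (k : Type*) [Field k] [Fintype k] [CharP k p]
    (a : LaurentSeries k) (ha0 : a ≠ 0)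
    (hψ : ∀ K : ℤ, ∑ n ∈ Finset.range p, a.coeff (K * p + n * e) * (-1 : k) ^ n =
      (a.coeff K) ^ p) :
    -(e : ℤ) ≤ a.order ∧ (-(e : ℤ) < a.order → ¬ a.order ≡ -(e : ℤ) [ZMOD (p : ℤ)]) := by
  set l := a.order with hl
  have hcl : a.coeff l ≠ 0 := fun h => ha0 (HahnSeries.coeff_order_eq_zero.mp h)
  have hp2 : 2 ≤ p := hp.two_le
  have hp2' : (2 : ℤ) ≤ (p : ℤ) := by exact_mod_cast hp2
  constructor
  · -- part 1
    have h1 := hψ l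
    have h2 : (a.coeff l) ^ p ≠ 0 := pow_ne_zero _ hcl
    rw [← h1] at h2
    obtain ⟨n, hn, hterm⟩ := Finset.exists_ne_zero_of_sum_ne_zero h2
    have hcoef : a.coeff (l * p + n * e) ≠ 0 := fun h => hterm (by rw [h, zero_mul])
    have hge : l ≤ l * p + n * e := by
      by_contra hlt
      exact hcoef (HahnSeries.coeff_eq_zero_of_lt_order (lt_of_not_ge hlt))
    have hnlt : (n : ℤ) ≤ (p : ℤ) - 1 := by
      have := Finset.mem_range.mp hn
      omega
    have heZ : (0 : ℤ) < (e : ℤ) := by exact_mod_cast he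
    nlinarith [hge, hnlt, heZ, hp2']
  · -- part 2
    intro hlt hmod
    have hdvd : (p : ℤ) ∣ -(e : ℤ) - l := hmod.dvd
    obtain ⟨c, hc⟩ := hdvd
    -- l = -e - p*c
    have hlval : l = -(e : ℤ) - p * c := by linarith
    have hc0 : c < 0 := by nlinarith
    set K : ℤ := -c - e with hK
    have hKl : K < l := by
      rw [hlval, hK]
      nlinarith
    have hcoeffK : a.coeff K = 0 := HahnSeries.coeff_eq_zero_of_lt_order hKl
    have h1 := hψ K
    rw [hcoeffK, zero_pow hp.ne_zero] at h1
    have hsum : ∑ n ∈ Finset.range p, a.coeff (K * p + n * e) * (-1 : k) ^ n =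
        a.coeff (K * p + (p - 1 : ℕ) * e) * (-1 : k) ^ (p - 1) := by
      apply Finset.sum_eq_single
      · intro b hb hbne
        have hb' : b < p - 1 := by
          have := Finset.mem_range.mp hb; omega
        have hidx : K * p + (b : ℤ) * e < l := by
          have hb'' : (b : ℤ) ≤ (p : ℤ) - 2 := by
            have : b + 2 ≤ p := by omega
            have := (Int.ofNat_le.mpr this)
            push_cast at this ⊢
            linarith
          have heZ : (0 : ℤ) < (e : ℤ) := by exact_mod_cast he
          rw [hlval, hK]
          nlinarith
        rw [HahnSeries.coeff_eq_zero_of_lt_order hidx, zero_mul]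
      · intro h
        exact absurd (Finset.mem_range.mpr (by omega)) h
    have hidx2 : K * p + ((p - 1 : ℕ) : ℤ) * e = l := by
      have : ((p - 1 : ℕ) : ℤ) = (p : ℤ) - 1 := by
        have : 1 ≤ p := hp.one_lt.le
        omega
      rw [this, hlval, hK]; ring
    rw [hsum, hidx2] at h1
    have hne : ((-1 : k) ^ (p - 1)) ≠ 0 := pow_ne_zero _ (neg_ne_zero.mpr one_ne_zero)
    exact hcl (by
      rcases mul_eq_zero.mp h1 with h | h
      · exact h
      · exact absurd h hne)
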